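/- On the unit 3-sphere with metric g = dx₁² + sin²x₁ (dx₂² + sin²x₂ dx₃²) in hyperspherical coordinates, and for any nowhere-zero smooth function h = h(x₃), the vector field V = h(x₃) sin x₁ ∂/∂x₁ satisfies ∇_X V = (h cos x₁) X + θ(X) V with θ = (h'/h) dx₃; hence V is a proper torse-forming vector field with conformal scalar f = h(x₃) cos x₁. -/
import Mathlib


/-- Algebraic model of a Riemannian manifold: `C` is the ring of smooth functions,
`X` the `C`-module of vector fields, `D` the action of vector fields on functions,
`lie` the Lie bracket, `g` the metric and `conn` its Levi-Civita connection. -/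
structure LeviCivita (C X : Type) [CommRing C] [AddCommGroup X] [Module C X]
    (D : X → C → C) (lie : X → X → X) (g : X → X → C) (conn : X → X → X) : Prop where
  g_symm : ∀ A B, g A B = g B A
  g_add_left : ∀ A B Z, g (A + B) Z = g A Z + g B Z
  g_smul_left : ∀ (c : C) (A Z : X), g (c • A) Z = c * g A Z
  g_nondeg : ∀ A, (∀ Z, g A Z = 0) → A = 0
  D_add : ∀ Z a b, D Z (a + b) = D Z a + D Z b
  D_mul : ∀ Z a b, D Z (a * b) = D Z a * b + a * D Z b
  D_add_vec : ∀ Z W a, D (Z + W) a = D Z a + D W a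
  D_smul_vec : ∀ (c : C) (Z : X) (a : C), D (c • Z) a = c * D Z a
  conn_add_left : ∀ Z W Y, conn (Z + W) Y = conn Z Y + conn W Y
  conn_smul_left : ∀ (c : C) (Z Y : X), conn (c • Z) Y = c • conn Z Y
  conn_add_right : ∀ Z A B, conn Z (A + B) = conn Z A + conn Z B
  conn_leibniz : ∀ (Z : X) (c : C) (Y : X), conn Z (c • Y) = D Z c • Y + c • conn Z Y
  metric_compat : ∀ Z A B, D Z (g A B) = g (conn Z A) B + g A (conn Z B)
  torsion_free : ∀ A B, conn A B - conn B A = lie A B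

/-- on `(S³, g)` with `g = dx₁² + sin²x₁(dx₂² + sin²x₂ dx₃²)`,
in the orthonormal frame `e₁, e₂, e₃` with the stated Christoffel relations,
the field `V = h(x₃) sin x₁ e₁` satisfies
`∇_X V = (h cos x₁) X + θ(X) V` with `θ = (h'/h) dx₃`; here `s1 = sin x₁`,
`c1 = cos x₁`, `s2 = sin x₂`, `hp = h'`, and `dx₃(a₁e₁+a₂e₂+a₃e₃) = a₃/(s1 s2)`. -/
theorem stmt18 {C X : Type} [CommRing C] [AddCommGroup X] [Module C X]
    (D : X → C → C) (lie : X → X → X) (g : X → X → C) (conn : X → X → X)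
    (hLC : LeviCivita C X D lie g conn)
    (e1 e2 e3 : X)
    (horth : g e1 e1 = 1 ∧ g e2 e2 = 1 ∧ g e3 e3 = 1 ∧
      g e1 e2 = 0 ∧ g e1 e3 = 0 ∧ g e2 e3 = 0)
    (s1 c1 s2 s1inv s2inv h hp hinv : C)
    (hs1 : s1 * s1inv = 1) (hs2 : s2 * s2inv = 1) (hh : h * hinv = 1)
    -- 'sin x₁' depends only on x₁, 'h' only on x₃:
    (hD1s1 : D e1 s1 = c1) (hD2s1 : D e2 s1 = 0) (hD3s1 : D e3 s1 = 0)
    (hD1h : D e1 h = 0) (hD2h : D e2 h = 0) (hD3h : D e3 h = hp * (s1inv * s2inv))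
    -- the stated Christoffel relations used:
    (hc11 : conn e1 e1 = 0)
    (hc21 : conn e2 e1 = (c1 * s1inv) • e2)
    (hc31 : conn e3 e1 = (c1 * s1inv) • e3) :
    ∀ a1 a2 a3 : C,
      conn (a1 • e1 + a2 • e2 + a3 • e3) ((h * s1) • e1) =
        (h * c1) • (a1 • e1 + a2 • e2 + a3 • e3)
          + ((hp * hinv) * (a3 * (s1inv * s2inv))) • ((h * s1) • e1) := by
  intro a1 a2 a3
  rw [hLC.conn_add_left, hLC.conn_add_left, hLC.conn_smul_left, hLC.conn_smul_left,
    hLC.conn_smul_left, hLC.conn_leibniz, hLC.conn_leibniz, hLC.conn_leibniz,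
    hLC.D_mul, hLC.D_mul, hLC.D_mul, hD1s1, hD2s1, hD3s1, hD1h, hD2h, hD3h,
    hc11, hc21, hc31]
  match_scalars
  · linear_combination (-(a3 * hp * s2inv * s1inv * s1)) * hh
  · linear_combination (a2 * h * c1) * hs1
  · linear_combination (a3 * h * c1) * hs1
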